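/- Let G=(V,E) be a DAG, let u,v,x be distinct vertices, and let W ⊆ V∖{u,v,x}. If u and v are d-connected given W in G but d-separated given W∪{x} in G, then x is definite ancestral to W∪{u,v}; that is, for every DAG G' Markov equivalent to G, x is an ancestor in G' of at least one element of W∪{u,v}. -/

import Mathlib

/-! Basic graphical-model definitions: DAGs as binary relations on a finite
vertex type, d-separation via paths (lists of vertices), Markov equivalence,
and definite (non-)ancestral relations. -/

variable {V : Type*}

/-- Two nodes are adjacent in the digraph `E` if there is an edge between them
in either direction. -/
def Adjacent (E : V → V → Prop) (a b : V) : Prop := E a b ∨ E b a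

/-- A digraph is acyclic if it has no directed cycles. -/
def Acyclic (E : V → V → Prop) : Prop := ∀ v : V, ¬ Relation.TransGen E v v

/-- `u` is an ancestor of `v`: there is a directed path from `u` to `v`
(by convention, `v` is an ancestor of itself). -/
def Anc (E : V → V → Prop) (u v : V) : Prop := Relation.ReflTransGen E u v

/-- A list of vertices is a path in the skeleton of `E`: consecutive vertices
are adjacent and no vertex repeats. -/
def IsPath (E : V → V → Prop) (p : List V) : Prop :=
  p.Nodup ∧ List.Chain' (Adjacent E) p

/-- A path `p` is d-connecting given the conditioning set `C` if every collider
on it is an ancestor of an element of `C` and every non-collider on it is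
outside `C`.  Interior vertices of `p` are exactly the middle elements `x` of
consecutive triples `[a, x, b]` of `p`; such an `x` is a collider when both
incident edges point into it. -/
def IsDConnectingPath (E : V → V → Prop) (C : Set V) (p : List V) : Prop :=
  ∀ a x b : V, [a, x, b] <:+: p →
    ((E a x ∧ E b x) → ∃ c ∈ C, Anc E x c) ∧ (¬ (E a x ∧ E b x) → x ∉ C)

/-- `u` and `v` are d-connected given `C` in `E`. -/
def DConn (E : V → V → Prop) (C : Set V) (u v : V) : Prop :=
  ∃ p : List V, IsPath E p ∧ p.head? = some u ∧ p.getLast? = some v ∧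
    IsDConnectingPath E C p

/-- `u` and `v` are d-separated given `C` in `E`. -/
def DSep (E : V → V → Prop) (C : Set V) (u v : V) : Prop := ¬ DConn E C u v

/-- Two DAGs on the same vertex set are Markov equivalent if they have exactly
the same d-separation relations. -/
def MarkovEquiv (E E' : V → V → Prop) : Prop :=
  ∀ (u v : V) (C : Set V), u ≠ v → u ∉ C → v ∉ C → (DSep E C u v ↔ DSep E' C u v)

/-- `u` is definite ancestral to `v` (`u ⇝ v`): `u` is an ancestor of `v` in
every DAG Markov equivalent to `E`. -/
def DefAnc (E : V → V → Prop) (u v : V) : Prop :=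
  ∀ E' : V → V → Prop, Acyclic E' → MarkovEquiv E E' → Anc E' u v

/-- `u` is definite non-ancestral to `v` (`u ̸⇝ v`): `u` is not an ancestor of
`v` in any DAG Markov equivalent to `E`. -/
def DefNonAnc (E : V → V → Prop) (u v : V) : Prop :=
  ∀ E' : V → V → Prop, Acyclic E' → MarkovEquiv E E' → ¬ Anc E' u v

/-- The CPDAG of `E` has a directed edge `a → b` iff `a` and `b` are adjacent
and the edge is oriented `a → b` in every member of the Markov equivalence
class of `E`. -/
def CPDAGDir (E : V → V → Prop) (a b : V) : Prop :=
  Adjacent E a b ∧ ∀ E' : V → V → Prop, Acyclic E' → MarkovEquiv E E' → E' a b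

/-- A possibly directed path in the CPDAG of `E`: a path in the skeleton such
that no edge on it is directed backwards (as `x_{i+1} → x_i`) in the CPDAG. -/
def IsPossiblyDirectedPath (E : V → V → Prop) (p : List V) : Prop :=
  p.Nodup ∧ List.Chain' (fun a b => Adjacent E a b ∧ ¬ CPDAGDir E b a) p

/-- A path is unshielded if no three consecutive vertices on it are pairwise
adjacent. -/
def UnshieldedPath (E : V → V → Prop) (p : List V) : Prop :=
  ∀ a x b : V, [a, x, b] <:+: p → ¬ Adjacent E a b



open Relation in
/-- Following directed edges forward along a d-connecting suffix reaches
`W` or the last vertex of the suffix. -/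
lemma fwd_walk {E : V → V → Prop} {W : Set V} {p : List V}
    (hd : IsDConnectingPath E W p) (hc : List.Chain' (Adjacent E) p) :
    ∀ (r : List V) (y b : V), (y :: b :: r) <:+ p → E y b →
      ∃ w, (w ∈ W ∨ (y :: b :: r).getLast? = some w) ∧ Anc E y w := by
  intro r
  induction r with
  | nil =>
      intro y b _ hyb
      exact ⟨b, Or.inr rfl, Relation.ReflTransGen.single hyb⟩
  | cons c r' ih =>
      intro y b hs hyb
      have htriple : [y, b, c] <:+: p := by
        obtain ⟨t, ht⟩ := hs
        exact ⟨t, r', by simpa using ht⟩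
      by_cases hcb : E c b
      · obtain ⟨w, hwW, hanc⟩ := (hd y b c htriple).1 ⟨hyb, hcb⟩
        exact ⟨w, Or.inl hwW, Relation.ReflTransGen.head hyb hanc⟩
      · have hadj3 : List.Chain' (Adjacent E) [y, b, c] := hc.infix htriple
        have hbc : E b c := by
          have h2 : Adjacent E b c :=
            (List.isChain_cons_cons.mp (List.isChain_cons_cons.mp hadj3).2).1
          rcases h2 with h | h
          · exact h
          · exact absurd h hcb
        have hs' : (b :: c :: r') <:+ p :=
          (List.suffix_cons y (b :: c :: r')).trans hs
        obtain ⟨w, hw, hanc⟩ := ih b c hs' hbc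
        refine ⟨w, ?_, Relation.ReflTransGen.head hyb hanc⟩
        rcases hw with h | h
        · exact Or.inl h
        · right; rw [List.getLast?_cons_cons]; exact h

lemma IsDConnectingPath.reverse {E : V → V → Prop} {W : Set V} {p : List V}
    (hd : IsDConnectingPath E W p) : IsDConnectingPath E W p.reverse := by
  intro a z b h
  have h' : [b, z, a] <:+: p := by
    have := List.reverse_infix.mpr h
    simpa using this
  constructor
  · rintro ⟨haz, hbz⟩
    exact (hd b z a h').1 ⟨hbz, haz⟩
  · intro hn
    exact (hd b z a h').2 (fun hp => hn ⟨hp.2, hp.1⟩)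

lemma getLast?_of_suffix {s p : List V} (h : s <:+ p) (hs : s ≠ []) :
    s.getLast? = p.getLast? := by
  obtain ⟨t, rfl⟩ := h
  rw [List.getLast?_append_of_ne_nil _ hs]

/-- From an interior non-collider `z` with an outgoing edge towards the tail,
`z` is an ancestor of `W` or of the last vertex. -/
lemma reach_tail {E : V → V → Prop} {W : Set V} {p : List V}
    (hd : IsDConnectingPath E W p) (hc : List.Chain' (Adjacent E) p)
    {a z b : V} (h : [a, z, b] <:+: p) (hzb : E z b) :
    ∃ w, (w ∈ W ∨ p.getLast? = some w) ∧ Anc E z w := by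
  obtain ⟨l₁, l₂, heq⟩ := h
  have hs : (z :: b :: l₂) <:+ p := ⟨l₁ ++ [a], by simpa using heq⟩
  obtain ⟨w, hw, hanc⟩ := fwd_walk hd hc l₂ z b hs hzb
  refine ⟨w, ?_, hanc⟩
  rcases hw with h' | h'
  · exact Or.inl h'
  · right; rw [← getLast?_of_suffix hs (by simp)]; exact h'

/-- Lemma 2, first bullet: if `u, v` are d-connected given `W`
but d-separated given `W ∪ {x}`, then `x` is definite ancestral to
`W ∪ {u, v}`. -/
theorem stmt2 [Fintype V] (E : V → V → Prop) (hE : Acyclic E) (u v x : V) (W : Set V)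
    (huv : u ≠ v) (hux : u ≠ x) (hvx : v ≠ x)
    (hWu : u ∉ W) (hWv : v ∉ W) (hWx : x ∉ W)
    (hconn : DConn E W u v) (hsep : DSep E (W ∪ {x}) u v) :
    ∀ E' : V → V → Prop, Acyclic E' → MarkovEquiv E E' →
      ∃ w : V, (w ∈ W ∨ w = u ∨ w = v) ∧ Anc E' x w := by
  intro E' hE' hME
  have huWx : u ∉ W ∪ ({x} : Set V) := by
    simp only [Set.mem_union, Set.mem_singleton_iff]; tauto
  have hvWx : v ∉ W ∪ ({x} : Set V) := by
    simp only [Set.mem_union, Set.mem_singleton_iff]; tauto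
  have hsep' : DSep E' (W ∪ {x}) u v :=
    (hME u v (W ∪ {x}) huv huWx hvWx).mp hsep
  have hconn' : DConn E' W u v := by
    by_contra h
    exact ((hME u v W huv hWu hWv).mpr h) hconn
  obtain ⟨p, ⟨hnodup, hchain⟩, hhead, hlast, hdW⟩ := hconn'
  have hnotd : ¬ IsDConnectingPath E' (W ∪ {x}) p := by
    intro h
    exact hsep' ⟨p, ⟨hnodup, hchain⟩, hhead, hlast, h⟩
  simp only [IsDConnectingPath, not_forall] at hnotd
  obtain ⟨a, z, b, htriple, hfail⟩ := hnotd
  have hcol : (E' a z ∧ E' b z) → ∃ c ∈ W ∪ ({x} : Set V), Anc E' z c := by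
    rintro hzc
    obtain ⟨c, hc, hanc⟩ := (hdW a z b htriple).1 hzc
    exact ⟨c, Or.inl hc, hanc⟩
  have hnc : ¬ (E' a z ∧ E' b z) := by
    intro hzc
    exact hfail ⟨fun _ => hcol hzc, fun h => absurd hzc (by tauto)⟩
  have hzWx : z ∈ W ∪ ({x} : Set V) := by
    by_contra h
    exact hfail ⟨fun hzc => hcol hzc, fun _ => h⟩
  have hzW : z ∉ W := (hdW a z b htriple).2 hnc
  have hzx : z = x := by
    rcases hzWx with h | h
    · exact absurd h hzW
    · exact h
  subst hzx
  have hadj3 : List.Chain' (Adjacent E') [a, z, b] := hchain.infix htriple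
  have hadjaz : Adjacent E' a z := (List.isChain_cons_cons.mp hadj3).1
  have hadjzb : Adjacent E' z b :=
    (List.isChain_cons_cons.mp (List.isChain_cons_cons.mp hadj3).2).1
  by_cases hzb : E' z b
  · obtain ⟨w, hw, hanc⟩ := reach_tail hdW hchain htriple hzb
    refine ⟨w, ?_, hanc⟩
    rcases hw with h | h
    · exact Or.inl h
    · rw [hlast] at h
      exact Or.inr (Or.inr (Option.some_injective _ h.symm))
  · have hbz : E' b z := hadjzb.resolve_left hzb
    have hza : E' z a := by
      rcases hadjaz with h | h
      · exact absurd ⟨h, hbz⟩ hnc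
      · exact h
    have htriple' : [b, z, a] <:+: p.reverse := by
      have h1 : ([a, z, b] : List V).reverse <:+: p.reverse :=
        List.reverse_infix.mpr htriple
      simpa using h1
    have hchain' : List.Chain' (Adjacent E') p.reverse := by
      refine List.isChain_reverse.mpr ?_
      exact hchain.imp fun a b h => h.symm
    obtain ⟨w, hw, hanc⟩ := reach_tail hdW.reverse hchain' htriple' hza
    refine ⟨w, ?_, hanc⟩
    rcases hw with h | h
    · exact Or.inl h
    · rw [List.getLast?_reverse, hhead] at h
      exact Or.inr (Or.inl (Option.some_injective _ h.symm))
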